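/- Let H_S and A be Hermitian d_S×d_S matrices, let (Π_k)_{k} be a finite family of pairwise orthogonal projectors on ℂ^{d_E} with Σ_k Π_k = 1, let m_k be real numbers, set m̂ = Σ_k m_k Π_k, and let ρ_E = Σ_k q_k Π_k with q_k ≥ 0. Define H_T = H_S⊗1 + A⊗m̂ on ℂ^{d_S}⊗ℂ^{d_E}. Then for every d_S×d_S matrix ρ_S and every t ∈ ℝ: e^{−iH_T t} (ρ_S ⊗ ρ_E) e^{iH_T t} = Σ_k q_k ( U_k(t) ρ_S U_k(t)† ) ⊗ Π_k, where U_k(t) = e^{−i(H_S + m_k A)t}; consequently the reduced system state is Tr_E[ e^{−iH_T t}(ρ_S⊗ρ_E)e^{iH_T t} ] = Σ_k q_k Tr(Π_k) · U_k(t) ρ_S U_k(t)†, a mixture of unitary evolutions. -/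

import Mathlib

open Matrix

/-- Tensor product `ρ ⊗ ρE` of a system matrix with an environment matrix. -/
noncomputable def kron2 (d dE : ℕ)
    (ρ : Matrix (Fin d) (Fin d) ℂ) (ρE : Matrix (Fin dE) (Fin dE) ℂ) :
    Matrix (Fin d × Fin dE) (Fin d × Fin dE) ℂ :=
  Matrix.of fun x y => ρ x.1 y.1 * ρE x.2 y.2

/-- Partial trace over the environment factor. -/
noncomputable def trEnv (d dE : ℕ)
    (M : Matrix (Fin d × Fin dE) (Fin d × Fin dE) ℂ) :
    Matrix (Fin d) (Fin d) ℂ :=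
  Matrix.of fun a b => ∑ k : Fin dE, M (a, k) (b, k)

/-- The conditional unitary `U_k(t) = e^{-i(H_S + m_k A)t}`. -/
noncomputable def condU (dS : ℕ) (HS A : Matrix (Fin dS) (Fin dS) ℂ)
    (mk : ℝ) (t : ℝ) : Matrix (Fin dS) (Fin dS) ℂ :=
  NormedSpace.exp ((-(Complex.I * (t : ℂ))) • (HS + (mk : ℂ) • A))


section Aux
open NormedSpace

variable {d dE : ℕ}

lemma kron2_mul (B C : Matrix (Fin d) (Fin d) ℂ) (P Q : Matrix (Fin dE) (Fin dE) ℂ) :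
    kron2 d dE B P * kron2 d dE C Q = kron2 d dE (B * C) (P * Q) := by
  ext ⟨a, i⟩ ⟨b, j⟩
  simp [kron2, Matrix.mul_apply, Fintype.sum_prod_type, Finset.mul_sum, Finset.sum_mul]
  rw [Finset.sum_comm]
  congr 1; ext c; congr 1; ext k; ring

lemma kron2_one : kron2 d dE 1 1 = 1 := by
  ext ⟨a, i⟩ ⟨b, j⟩
  simp [kron2, Matrix.one_apply, Prod.ext_iff]
  aesop

lemma kron2_smul_left (c : ℂ) (B : Matrix (Fin d) (Fin d) ℂ) (P : Matrix (Fin dE) (Fin dE) ℂ) :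
    kron2 d dE (c • B) P = c • kron2 d dE B P := by
  ext ⟨a, i⟩ ⟨b, j⟩; simp [kron2, mul_assoc]

lemma kron2_smul_right (c : ℂ) (B : Matrix (Fin d) (Fin d) ℂ) (P : Matrix (Fin dE) (Fin dE) ℂ) :
    kron2 d dE B (c • P) = c • kron2 d dE B P := by
  ext ⟨a, i⟩ ⟨b, j⟩; simp [kron2]; ring

lemma kron2_add_left (B C : Matrix (Fin d) (Fin d) ℂ) (P : Matrix (Fin dE) (Fin dE) ℂ) :
    kron2 d dE (B + C) P = kron2 d dE B P + kron2 d dE C P := by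
  ext ⟨a, i⟩ ⟨b, j⟩; simp [kron2, add_mul]

lemma kron2_sum_right {ι : Type} (s : Finset ι) (B : Matrix (Fin d) (Fin d) ℂ)
    (P : ι → Matrix (Fin dE) (Fin dE) ℂ) :
    kron2 d dE B (∑ k ∈ s, P k) = ∑ k ∈ s, kron2 d dE B (P k) := by
  ext ⟨a, i⟩ ⟨b, j⟩
  simp only [kron2, Matrix.of_apply, Matrix.sum_apply, Finset.mul_sum]

lemma kron2_zero_right (B : Matrix (Fin d) (Fin d) ℂ) :
    kron2 d dE B (0 : Matrix (Fin dE) (Fin dE) ℂ) = 0 := by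
  ext ⟨a, i⟩ ⟨b, j⟩; simp [kron2]

/-- kron2 in the first argument as a continuous linear map. -/
noncomputable def kronCLM (P : Matrix (Fin dE) (Fin dE) ℂ) :
    Matrix (Fin d) (Fin d) ℂ →L[ℂ] Matrix (Fin d × Fin dE) (Fin d × Fin dE) ℂ :=
  LinearMap.toContinuousLinearMap
    { toFun := fun B => kron2 d dE B P
      map_add' := fun B C => kron2_add_left B C P
      map_smul' := fun c B => kron2_smul_left c B P }

@[simp] lemma kronCLM_apply (P : Matrix (Fin dE) (Fin dE) ℂ) (B : Matrix (Fin d) (Fin d) ℂ) :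
    kronCLM P B = kron2 d dE B P := rfl

section Key
variable {ι : Type} [Fintype ι]
  (B : ι → Matrix (Fin d) (Fin d) ℂ) (P : ι → Matrix (Fin dE) (Fin dE) ℂ)
  (hidem : ∀ k, P k * P k = P k) (horth : ∀ k l, k ≠ l → P k * P l = 0)
  (hsum : ∑ k : ι, P k = 1)

include hidem horth in
lemma sum_kron_mul (C : ι → Matrix (Fin d) (Fin d) ℂ) :
    (∑ k : ι, kron2 d dE (B k) (P k)) * (∑ k : ι, kron2 d dE (C k) (P k))
      = ∑ k : ι, kron2 d dE (B k * C k) (P k) := by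
  rw [Finset.sum_mul_sum]
  refine Finset.sum_congr rfl fun k _ => ?_
  rw [Finset.sum_eq_single k]
  · rw [kron2_mul, hidem]
  · intro l _ hl
    rw [kron2_mul, horth k l (Ne.symm hl), kron2_zero_right]
  · intro h; exact absurd (Finset.mem_univ k) h

include hidem horth hsum in
lemma pow_sum_kron (n : ℕ) :
    (∑ k : ι, kron2 d dE (B k) (P k)) ^ n = ∑ k : ι, kron2 d dE ((B k) ^ n) (P k) := by
  induction n with
  | zero =>
    simp only [pow_zero]
    rw [← kron2_sum_right, hsum, kron2_one]
  | succ n ih =>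
    rw [pow_succ, ih, sum_kron_mul _ _ hidem horth]
    simp [pow_succ]

include hidem horth hsum in
lemma exp_sum_kron :
    exp (∑ k : ι, kron2 d dE (B k) (P k)) = ∑ k : ι, kron2 d dE (exp (B k)) (P k) := by
  letI : NormedRing (Matrix (Fin d) (Fin d) ℂ) := Matrix.linftyOpNormedRing
  letI : NormedAlgebra ℂ (Matrix (Fin d) (Fin d) ℂ) := Matrix.linftyOpNormedAlgebra
  letI : NormedRing (Matrix (Fin d × Fin dE) (Fin d × Fin dE) ℂ) := Matrix.linftyOpNormedRing
  letI : NormedAlgebra ℂ (Matrix (Fin d × Fin dE) (Fin d × Fin dE) ℂ) :=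
    Matrix.linftyOpNormedAlgebra
  have hsummable : ∀ k : ι, Summable fun n : ℕ => ((n.factorial : ℂ))⁻¹ • (B k) ^ n := fun k =>
    expSeries_summable' (𝕂 := ℂ) (B k)
  rw [exp_eq_tsum ℂ]
  have hk : ∀ k : ι, Summable fun n : ℕ =>
      ((n.factorial : ℂ))⁻¹ • kron2 d dE ((B k) ^ n) (P k) := by
    intro k
    refine ((hsummable k).map (kronCLM (P k)).toLinearMap.toAddMonoidHom
      (kronCLM (P k)).continuous).congr fun n => ?_
    simp [Function.comp, kron2_smul_left]
  have hrepr : ∀ k : ι, kron2 d dE (exp (B k)) (P k)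
      = ∑' n : ℕ, ((n.factorial : ℂ))⁻¹ • kron2 d dE ((B k) ^ n) (P k) := by
    intro k
    rw [exp_eq_tsum ℂ, ← kronCLM_apply]
    rw [(kronCLM (P k)).map_tsum (hsummable k)]
    exact tsum_congr fun n => by simp [kron2_smul_left]
  rw [Finset.sum_congr rfl fun k _ => hrepr k]
  rw [← Summable.tsum_finsetSum fun k _ => hk k]
  refine tsum_congr fun n => ?_
  rw [pow_sum_kron B P hidem horth hsum n, Finset.smul_sum]

lemma trEnv_kron2 (B : Matrix (Fin d) (Fin d) ℂ) (P : Matrix (Fin dE) (Fin dE) ℂ) :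
    trEnv d dE (kron2 d dE B P) = P.trace • B := by
  ext a b
  simp only [trEnv, kron2, Matrix.of_apply, Matrix.smul_apply, Matrix.trace,
    Matrix.diag, smul_eq_mul]
  rw [Finset.sum_mul]
  exact Finset.sum_congr rfl fun x _ => mul_comm _ _

lemma trEnv_sum {ι : Type} [Fintype ι] (M : ι → Matrix (Fin d × Fin dE) (Fin d × Fin dE) ℂ) :
    trEnv d dE (∑ k : ι, M k) = ∑ k : ι, trEnv d dE (M k) := by
  ext a b
  simp only [trEnv, Matrix.of_apply, Matrix.sum_apply]
  rw [Finset.sum_comm]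

lemma trEnv_smul (c : ℂ) (M : Matrix (Fin d × Fin dE) (Fin d × Fin dE) ℂ) :
    trEnv d dE (c • M) = c • trEnv d dE M := by
  ext a b
  simp [trEnv, Finset.mul_sum]

lemma condU_def (dS : ℕ) (HS A : Matrix (Fin dS) (Fin dS) ℂ) (mk t : ℝ) :
    condU dS HS A mk t
      = NormedSpace.exp ((-(Complex.I * (t : ℂ))) • (HS + (mk : ℂ) • A)) := rfl

end Key

end Aux

/-- Exact solution of the paper's spin-magnet model: for a system coupled to a
magnet via `H_T = H_S ⊗ 1 + A ⊗ m̂`, with `m̂ = Σ_k m_k Π_k` and the initial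
magnet state `ρ_E = Σ_k q_k Π_k` a mixture over magnetisation sectors, the
global state stays of the form `Σ_k q_k (U_k(t) ρ_S U_k(t)†) ⊗ Π_k`, and the
reduced system state is the corresponding mixture of unitary evolutions. -/
theorem stmt_16 (dS dE : ℕ) (ι : Type) [Fintype ι]
    (HS A : Matrix (Fin dS) (Fin dS) ℂ)
    (hHS : HS.IsHermitian) (hA : A.IsHermitian)
    (P : ι → Matrix (Fin dE) (Fin dE) ℂ)
    (hherm : ∀ k, (P k).IsHermitian)
    (hidem : ∀ k, P k * P k = P k)
    (horth : ∀ k l, k ≠ l → P k * P l = 0)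
    (hsum : ∑ k : ι, P k = 1)
    (m : ι → ℝ) (q : ι → ℝ) (hq : ∀ k, 0 ≤ q k) :
    ∀ (ρS : Matrix (Fin dS) (Fin dS) ℂ) (t : ℝ),
      (NormedSpace.exp ((-(Complex.I * (t : ℂ))) •
          (kron2 dS dE HS 1 + kron2 dS dE A (∑ k : ι, (m k : ℂ) • P k))) *
        kron2 dS dE ρS (∑ k : ι, (q k : ℂ) • P k) *
        NormedSpace.exp ((Complex.I * (t : ℂ)) •
          (kron2 dS dE HS 1 + kron2 dS dE A (∑ k : ι, (m k : ℂ) • P k)))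
        = ∑ k : ι, (q k : ℂ) •
            kron2 dS dE (condU dS HS A (m k) t * ρS * (condU dS HS A (m k) t)ᴴ) (P k)) ∧
      trEnv dS dE
        (NormedSpace.exp ((-(Complex.I * (t : ℂ))) •
            (kron2 dS dE HS 1 + kron2 dS dE A (∑ k : ι, (m k : ℂ) • P k))) *
          kron2 dS dE ρS (∑ k : ι, (q k : ℂ) • P k) *
          NormedSpace.exp ((Complex.I * (t : ℂ)) •
            (kron2 dS dE HS 1 + kron2 dS dE A (∑ k : ι, (m k : ℂ) • P k))))
        = ∑ k : ι, ((q k : ℂ) * (P k).trace) •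
            (condU dS HS A (m k) t * ρS * (condU dS HS A (m k) t)ᴴ) := by
  intro ρS t
  classical
  set U : ι → Matrix (Fin dS) (Fin dS) ℂ := fun k => condU dS HS A (m k) t with hU
  -- decomposition of the scaled Hamiltonians
  have hdecomp : ∀ s : ℂ, s • (kron2 dS dE HS 1 + kron2 dS dE A (∑ k : ι, (m k : ℂ) • P k))
      = ∑ k : ι, kron2 dS dE (s • (HS + (m k : ℂ) • A)) (P k) := by
    intro s
    have h1 : kron2 dS dE HS 1 = ∑ k : ι, kron2 dS dE HS (P k) := by
      rw [← hsum, kron2_sum_right]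
    have h2 : kron2 dS dE A (∑ k : ι, (m k : ℂ) • P k)
        = ∑ k : ι, kron2 dS dE ((m k : ℂ) • A) (P k) := by
      rw [kron2_sum_right]
      exact Finset.sum_congr rfl fun k _ => by
        rw [kron2_smul_right, kron2_smul_left]
    rw [h1, h2, ← Finset.sum_add_distrib, Finset.smul_sum]
    refine Finset.sum_congr rfl fun k _ => ?_
    rw [← kron2_add_left, kron2_smul_left]
  have hexp : ∀ s : ℂ,
      NormedSpace.exp (s • (kron2 dS dE HS 1 + kron2 dS dE A (∑ k : ι, (m k : ℂ) • P k)))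
        = ∑ k : ι, kron2 dS dE (NormedSpace.exp (s • (HS + (m k : ℂ) • A))) (P k) := by
    intro s
    rw [hdecomp s]
    exact exp_sum_kron _ P hidem horth hsum
  -- the adjoint identity
  have hadj : ∀ k : ι,
      NormedSpace.exp ((Complex.I * (t : ℂ)) • (HS + (m k : ℂ) • A)) = (U k)ᴴ := by
    intro k
    rw [hU]
    show _ = (condU dS HS A (m k) t)ᴴ
    rw [condU_def, ← Matrix.exp_conjTranspose]
    congr 1
    rw [Matrix.conjTranspose_smul]
    rw [Matrix.conjTranspose_add, hHS.eq, Matrix.conjTranspose_smul, hA.eq]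
    congr 1
    · simp
    · congr 1
      simp [Complex.conj_ofReal]
  have hmid : kron2 dS dE ρS (∑ k : ι, (q k : ℂ) • P k)
      = ∑ k : ι, kron2 dS dE ((q k : ℂ) • ρS) (P k) := by
    rw [kron2_sum_right]
    exact Finset.sum_congr rfl fun k _ => by rw [kron2_smul_right, kron2_smul_left]
  have key :
      NormedSpace.exp ((-(Complex.I * (t : ℂ))) •
          (kron2 dS dE HS 1 + kron2 dS dE A (∑ k : ι, (m k : ℂ) • P k))) *
        kron2 dS dE ρS (∑ k : ι, (q k : ℂ) • P k) *
        NormedSpace.exp ((Complex.I * (t : ℂ)) •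
          (kron2 dS dE HS 1 + kron2 dS dE A (∑ k : ι, (m k : ℂ) • P k)))
        = ∑ k : ι, (q k : ℂ) • kron2 dS dE (U k * ρS * (U k)ᴴ) (P k) := by
    rw [hexp, hexp, hmid]
    rw [sum_kron_mul _ P hidem horth, sum_kron_mul _ P hidem horth]
    refine Finset.sum_congr rfl fun k _ => ?_
    rw [hadj k, ← kron2_smul_left]
    congr 1
    have : NormedSpace.exp ((-(Complex.I * (t : ℂ))) • (HS + (m k : ℂ) • A)) = U k := rfl
    rw [this, mul_smul_comm, smul_mul_assoc]
  refine ⟨key, ?_⟩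
  rw [key, trEnv_sum]
  refine Finset.sum_congr rfl fun k _ => ?_
  rw [trEnv_smul, trEnv_kron2, smul_smul]
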